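/- Let n ≥ 2, let f : ℝⁿ → ℝⁿ, and let x : ℝ → ℝⁿ, x⋆ : ℝ → ℝⁿ, τ : ℝ → ℝ, and Π : ℝ → ℝ^{(n−1)×n} (matrix-valued) be functions. Fix t₀ ∈ ℝ and set τ₀ = τ(t₀). Assume: (i) x is differentiable at t₀ with x′(t₀) = f(x(t₀)); (ii) τ is differentiable at t₀; (iii) x⋆ is differentiable at τ₀ with (x⋆)′(τ₀) = f(x⋆(τ₀)); (iv) Π is differentiable at τ₀, with derivative Π′(τ₀); (v) defining x_⊥(t) = Π(τ(t)) (x(t) − x⋆(τ(t))), the reconstruction identity x(t) − x⋆(τ(t)) = Π(τ(t))ᵀ x_⊥(t) holds for all t in a neighborhood of t₀. Then x_⊥ is differentiable at t₀ with x_⊥′(t₀) = τ′(t₀) Π′(τ₀) Π(τ₀)ᵀ x_⊥(t₀) + Π(τ₀) f( x⋆(τ₀) + Π(τ₀)ᵀ x_⊥(t₀) ) − Π(τ₀) f(x⋆(τ₀)) τ′(t₀). -/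

import Mathlib

open scoped RealInnerProductSpace

/-- Matrix–vector multiplication as a map between Euclidean spaces. -/
noncomputable def mulVecE {m n : ℕ} (A : Matrix (Fin m) (Fin n) ℝ)
    (v : EuclideanSpace ℝ (Fin n)) : EuclideanSpace ℝ (Fin m) :=
  (EuclideanSpace.equiv (Fin m) ℝ).symm (A.mulVec (EuclideanSpace.equiv (Fin n) ℝ v))

lemma mulVecE_apply {m n : ℕ} (A : Matrix (Fin m) (Fin n) ℝ)
    (v : EuclideanSpace ℝ (Fin n)) (i : Fin m) :
    mulVecE A v i = ∑ j, A i j * v j := by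
  simp [mulVecE, Matrix.mulVec, dotProduct]

lemma euclid_sum_apply {ι : Type*} {m : ℕ} (s : Finset ι)
    (f : ι → EuclideanSpace ℝ (Fin m)) (k : Fin m) :
    (∑ i ∈ s, f i) k = ∑ i ∈ s, f i k := by
  induction s using Finset.cons_induction with
  | empty => rfl
  | cons a s ha ih => simp [Finset.sum_cons, ih, PiLp.add_apply]

/-- The formula for `ẋ_⊥` in Theorem 1 (equation (12)) of the paper: with
`x_⊥(t) = Π(τ(t))(x(t) − x⋆(τ(t)))` and the reconstruction identity
`x(t) − x⋆(τ(t)) = Π(τ(t))ᵀ x_⊥(t)` holding near `t₀`,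
`ẋ_⊥ = τ̇ Π′(τ₀)Π(τ₀)ᵀ x_⊥ + Π(τ₀) f(x⋆(τ₀) + Π(τ₀)ᵀ x_⊥) − Π(τ₀) f(x⋆(τ₀)) τ̇`. -/
theorem transverse_coordinate_dynamics
    (n : ℕ) (hn : 2 ≤ n)
    (f : EuclideanSpace ℝ (Fin n) → EuclideanSpace ℝ (Fin n))
    (x xstar : ℝ → EuclideanSpace ℝ (Fin n)) (τ : ℝ → ℝ)
    (Pmat : ℝ → Matrix (Fin (n - 1)) (Fin n) ℝ)
    (t₀ τ₀ : ℝ) (hτ₀ : τ₀ = τ t₀)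
    (hx : HasDerivAt x (f (x t₀)) t₀)
    (τ' : ℝ) (hτ : HasDerivAt τ τ' t₀)
    (hxs : HasDerivAt xstar (f (xstar τ₀)) τ₀)
    (Pmat' : Matrix (Fin (n - 1)) (Fin n) ℝ)
    (hP : ∀ i j, HasDerivAt (fun s => Pmat s i j) (Pmat' i j) τ₀)
    (xperp : ℝ → EuclideanSpace ℝ (Fin (n - 1)))
    (hxperp : ∀ t, xperp t = mulVecE (Pmat (τ t)) (x t - xstar (τ t)))
    (hrecon : ∀ᶠ t in nhds t₀,
      x t - xstar (τ t) = mulVecE (Pmat (τ t)).transpose (xperp t)) :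
    HasDerivAt xperp
      (τ' • mulVecE (Pmat' * (Pmat τ₀).transpose) (xperp t₀)
        + mulVecE (Pmat τ₀) (f (xstar τ₀ + mulVecE (Pmat τ₀).transpose (xperp t₀)))
        - τ' • mulVecE (Pmat τ₀) (f (xstar τ₀))) t₀ := by
  classical
  subst hτ₀
  -- derivative of xstar ∘ τ
  have hxsτ : HasDerivAt (fun t => xstar (τ t)) (τ' • f (xstar (τ t₀))) t₀ := by
    simpa [Function.comp_def] using HasDerivAt.scomp t₀ hxs hτ
  have hv : HasDerivAt (fun t => x t - xstar (τ t))
      (f (x t₀) - τ' • f (xstar (τ t₀))) t₀ := hx.sub hxsτ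
  have hvj : ∀ j, HasDerivAt (fun t => (x t - xstar (τ t)) j)
      ((f (x t₀) - τ' • f (xstar (τ t₀))) j) t₀ := fun j => by
    simpa [Function.comp_def] using
      (EuclideanSpace.proj j).hasFDerivAt.comp_hasDerivAt t₀ hv
  have hPij : ∀ i j, HasDerivAt (fun t => Pmat (τ t) i j) (Pmat' i j * τ') t₀ :=
    fun i j => HasDerivAt.comp t₀ (hP i j) hτ
  have hgi : ∀ i, HasDerivAt
      (fun t => ∑ j, Pmat (τ t) i j * (x t - xstar (τ t)) j)
      (∑ j, ((Pmat' i j * τ') * (x t₀ - xstar (τ t₀)) j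
        + Pmat (τ t₀) i j * (f (x t₀) - τ' • f (xstar (τ t₀))) j)) t₀ :=
    fun i => HasDerivAt.fun_sum fun j _ => (hPij i j).mul (hvj j)
  have key : HasDerivAt
      (fun t => ∑ i, (∑ j, Pmat (τ t) i j * (x t - xstar (τ t)) j)
          • (EuclideanSpace.single i (1:ℝ)))
      (∑ i, (∑ j, ((Pmat' i j * τ') * (x t₀ - xstar (τ t₀)) j
        + Pmat (τ t₀) i j * (f (x t₀) - τ' • f (xstar (τ t₀))) j))
          • (EuclideanSpace.single i (1:ℝ))) t₀ :=
    HasDerivAt.fun_sum fun i _ => (hgi i).smul_const _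
  have hrec₀ : x t₀ - xstar (τ t₀) = mulVecE (Pmat (τ t₀)).transpose (xperp t₀) :=
    hrecon.self_of_nhds
  have hx₀ : x t₀ = xstar (τ t₀) + mulVecE (Pmat (τ t₀)).transpose (xperp t₀) := by
    rw [← hrec₀]; abel
  have hfun : xperp = fun t => ∑ i, (∑ j, Pmat (τ t) i j * (x t - xstar (τ t)) j)
      • (EuclideanSpace.single i (1:ℝ)) := by
    funext t
    rw [hxperp t]
    ext k
    rw [euclid_sum_apply]
    simp [mulVecE_apply, EuclideanSpace.single_apply, PiLp.smul_apply,
      mul_ite, mul_one, mul_zero, Finset.sum_ite_eq]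
  have key' : HasDerivAt xperp
      (∑ i, (∑ j, ((Pmat' i j * τ') * (x t₀ - xstar (τ t₀)) j
        + Pmat (τ t₀) i j * (f (x t₀) - τ' • f (xstar (τ t₀))) j))
          • (EuclideanSpace.single i (1:ℝ))) t₀ := by
    rw [hfun]; exact key
  convert key' using 1
  rw [hrec₀, hx₀]
  ext k
  rw [euclid_sum_apply]
  simp only [EuclideanSpace.single_apply, PiLp.smul_apply, smul_eq_mul,
    mul_ite, mul_one, mul_zero, Finset.sum_ite_eq, Finset.mem_univ, if_pos,
    PiLp.add_apply, PiLp.sub_apply, mulVecE_apply]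
  have e1 : τ' * ∑ j, (Pmat' * (Pmat (τ t₀)).transpose) k j * xperp t₀ j
      = ∑ j, Pmat' k j * τ' * (∑ l, (Pmat (τ t₀)).transpose j l * xperp t₀ l) := by
    simp only [Matrix.mul_apply, Matrix.transpose_apply, Finset.mul_sum,
      Finset.sum_mul]
    rw [Finset.sum_comm]
    exact Finset.sum_congr rfl fun j _ => Finset.sum_congr rfl fun l _ => by ring
  rw [e1, Finset.mul_sum, ← Finset.sum_add_distrib, ← Finset.sum_sub_distrib]
  apply Finset.sum_congr rfl
  intro j _
  ring
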